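/- Let g ≥ 1 be odd. An element f ∈ ℂ[α,γ] is a unit modulo the ideal J_g^- (i.e., its image in ℂ[α,γ]/J_g^- is invertible) if and only if f(4(g−2j), 0) ≠ 0 and f(−4(g−2j), 0) ≠ 0 for every j = 1, …, (g−1)/2. -/

import Mathlib

open MvPolynomial

/-- ζ_k^- ∈ ℂ[α,γ] (variables: X 0 = α, X 1 = γ):
    ζ_{k+1}^- = α ζ_k^- + 2k(k−1) γ ζ_{k−2}^- for k even, and
    ζ_{k+1}^- = α ζ_k^- − 16k² ζ_{k−1}^- + 2k(k−1) γ ζ_{k−2}^- for k odd. -/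
noncomputable def zm : ℕ → MvPolynomial (Fin 2) ℂ
  | 0 => 1
  | 1 => X 0
  | 2 => X 0 * zm 1 - C 16 * zm 0
  | (n + 3) =>
      if n % 2 = 0 then
        X 0 * zm (n + 2) + C (2 * ((n : ℂ) + 2) * ((n : ℂ) + 1)) * X 1 * zm n
      else
        X 0 * zm (n + 2) - C (16 * ((n : ℂ) + 2) ^ 2) * zm (n + 1)
          + C (2 * ((n : ℂ) + 2) * ((n : ℂ) + 1)) * X 1 * zm n

/-- ζ_k^- for an integer index k, with ζ_k^- = 0 for k < 0. -/
noncomputable def zmZ (k : ℤ) : MvPolynomial (Fin 2) ℂ :=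
  if k < 0 then 0 else zm k.toNat

/-- J_g^- = (ζ_g^-, ζ_{g+1}^-, ζ_{g+2}^-) ⊆ ℂ[α,γ]. -/
noncomputable def Jm (g : ℕ) : Ideal (MvPolynomial (Fin 2) ℂ) :=
  Ideal.span {zm g, zm (g + 1), zm (g + 2)}

/-! ### Auxiliary lemmas -/

lemma eval_zm_rec (x : Fin 2 → ℂ) (n : ℕ) :
    eval x (zm (n + 3)) =
      if n % 2 = 0 then
        x 0 * eval x (zm (n + 2)) + (2 * ((n : ℂ) + 2) * ((n : ℂ) + 1)) * x 1 * eval x (zm n)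
      else
        x 0 * eval x (zm (n + 2)) - (16 * ((n : ℂ) + 2) ^ 2) * eval x (zm (n + 1))
          + (2 * ((n : ℂ) + 2) * ((n : ℂ) + 1)) * x 1 * eval x (zm n) := by
  rw [zm]
  split <;> simp

/-- Units modulo an ideal are the polynomials avoiding the zero locus. -/
lemma isUnit_mk_iff_zeroLocus (I : Ideal (MvPolynomial (Fin 2) ℂ))
    (f : MvPolynomial (Fin 2) ℂ) :
    IsUnit (Ideal.Quotient.mk I f) ↔
      ∀ x ∈ MvPolynomial.zeroLocus ℂ I, eval x f ≠ 0 := by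
  constructor
  · rintro ⟨u, hu⟩ x hx hf
    obtain ⟨g, hg⟩ := Ideal.Quotient.mk_surjective (I := I) ((u⁻¹ : Units _) : _)
    have h1 : f * g - 1 ∈ I := by
      rw [← Ideal.Quotient.eq_zero_iff_mem]
      have : (Ideal.Quotient.mk I) (f * g) = 1 := by
        rw [map_mul, ← hu, hg, Units.mul_inv]
      simp [map_sub, this]
    have h2 : eval x (f * g - 1) = 0 := hx _ h1
    rw [map_sub, map_mul, hf, map_one] at h2
    simp at h2
  · intro h
    by_contra hne
    have hspan : Ideal.span {Ideal.Quotient.mk I f} ≠ ⊤ := by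
      rwa [Ne, Ideal.span_singleton_eq_top]
    obtain ⟨M, hM, hfM⟩ := Ideal.exists_le_maximal _ hspan
    have hfM' : Ideal.Quotient.mk I f ∈ M := hfM (Ideal.subset_span rfl)
    have hcomap : (M.comap (Ideal.Quotient.mk I)).IsMaximal :=
      Ideal.comap_isMaximal_of_surjective _ Ideal.Quotient.mk_surjective
    obtain ⟨x, hxeq⟩ :=
      (MvPolynomial.isMaximal_iff_eq_vanishingIdeal_singleton).mp hcomap
    have hxI : x ∈ MvPolynomial.zeroLocus ℂ I := by
      rw [MvPolynomial.mem_zeroLocus_iff]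
      intro p hp
      have : p ∈ M.comap (Ideal.Quotient.mk I) := by
        simp only [Ideal.mem_comap]
        rw [Ideal.Quotient.eq_zero_iff_mem.mpr hp]
        exact M.zero_mem
      rw [hxeq, MvPolynomial.mem_vanishingIdeal_singleton_iff] at this
      exact this
    have hfx : eval x f = 0 := by
      have : f ∈ M.comap (Ideal.Quotient.mk I) := by
        simpa only [Ideal.mem_comap] using hfM'
      rw [hxeq, MvPolynomial.mem_vanishingIdeal_singleton_iff] at this
      exact this
    exact h x hxI hfx

lemma mem_zeroLocus_Jm_iff {x : Fin 2 → ℂ} {g : ℕ} :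
    x ∈ MvPolynomial.zeroLocus ℂ (Jm g) ↔
      eval x (zm g) = 0 ∧ eval x (zm (g + 1)) = 0 ∧ eval x (zm (g + 2)) = 0 := by
  have : x ∈ MvPolynomial.zeroLocus ℂ (Jm g) ↔
      ({zm g, zm (g + 1), zm (g + 2)} : Set (MvPolynomial (Fin 2) ℂ)) ⊆
        ↑(MvPolynomial.vanishingIdeal ℂ ({x} : Set (Fin 2 → ℂ))) := by
    rw [← Set.singleton_subset_iff, Set.le_iff_subset.symm,
      MvPolynomial.le_zeroLocus_iff_le_vanishingIdeal, Jm]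
    exact ⟨fun h => Ideal.span_le.mp h, fun h => Ideal.span_le.mpr h⟩
  rw [this]
  simp only [Set.insert_subset_iff, Set.singleton_subset_iff, SetLike.mem_coe,
    MvPolynomial.mem_vanishingIdeal_singleton_iff]
  exact Iff.rfl

/-- If all three generators vanish at a point, then the second coordinate is 0. -/
lemma x1_eq_zero_of_zeros {x : Fin 2 → ℂ} {g : ℕ}
    (h0 : eval x (zm g) = 0) (h1 : eval x (zm (g + 1)) = 0)
    (h2 : eval x (zm (g + 2)) = 0) : x 1 = 0 := by
  by_contra hc
  have key : ∀ m, m ≤ g + 2 → eval x (zm (g + 2 - m)) = 0 := by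
    intro m
    induction m using Nat.strong_induction_on with
    | _ m ih =>
      intro hm
      rcases lt_or_ge m 3 with h3 | h3
      · interval_cases m
        · simpa using h2
        · have : g + 2 - 1 = g + 1 := by omega
          rw [this]; exact h1
        · have : g + 2 - 2 = g := by omega
          rw [this]; exact h0
      · set n := g + 2 - m with hnd
        have e1 : eval x (zm (n + 1)) = 0 := by
          have := ih (m - 1) (by omega) (by omega)
          rwa [show g + 2 - (m - 1) = n + 1 by omega] at this
        have e2 : eval x (zm (n + 2)) = 0 := by
          have := ih (m - 2) (by omega) (by omega)
          rwa [show g + 2 - (m - 2) = n + 2 by omega] at this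
        have e3 : eval x (zm (n + 3)) = 0 := by
          have := ih (m - 3) (by omega) (by omega)
          rwa [show g + 2 - (m - 3) = n + 3 by omega] at this
        have hrec := eval_zm_rec x n
        have h1' : ((n : ℂ) + 2) ≠ 0 := by
          have : ((n + 2 : ℕ) : ℂ) ≠ 0 := Nat.cast_ne_zero.mpr (by omega)
          push_cast at this; exact this
        have h2' : ((n : ℂ) + 1) ≠ 0 := by
          have : ((n + 1 : ℕ) : ℂ) ≠ 0 := Nat.cast_ne_zero.mpr (by omega)
          push_cast at this; exact this
        have hco : (2 * ((n : ℂ) + 2) * ((n : ℂ) + 1)) ≠ 0 :=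
          mul_ne_zero (mul_ne_zero two_ne_zero h1') h2'
        split at hrec
        · rw [e3, e2] at hrec
          have hz : (2 * ((n : ℂ) + 2) * ((n : ℂ) + 1)) * x 1 * eval x (zm n) = 0 := by
            linear_combination -hrec
          rcases mul_eq_zero.mp hz with h' | h'
          · rcases mul_eq_zero.mp h' with h'' | h''
            · exact absurd h'' hco
            · exact absurd h'' hc
          · exact h'
        · rw [e3, e2, e1] at hrec
          have hz : (2 * ((n : ℂ) + 2) * ((n : ℂ) + 1)) * x 1 * eval x (zm n) = 0 := by
            linear_combination -hrec
          rcases mul_eq_zero.mp hz with h' | h'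
          · rcases mul_eq_zero.mp h' with h'' | h''
            · exact absurd h'' hco
            · exact absurd h'' hc
          · exact h'
  have := key (g + 2) (le_refl _)
  simp only [Nat.sub_self] at this
  rw [show zm 0 = 1 from rfl] at this
  simp at this

/-- The product ∏_{i<m} (a² − 16(2i+1)²). -/
noncomputable def Pm (a : ℂ) (m : ℕ) : ℂ :=
  ∏ i ∈ Finset.range m, (a ^ 2 - 16 * (2 * (i : ℂ) + 1) ^ 2)

lemma eval_zm_gamma (a : ℂ) (m : ℕ) :
    eval ![a, 0] (zm (2 * m)) = Pm a m ∧ eval ![a, 0] (zm (2 * m + 1)) = a * Pm a m := by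
  induction m with
  | zero =>
    constructor
    · show eval ![a, 0] (zm 0) = Pm a 0
      rw [show zm 0 = 1 from rfl]; simp [Pm]
    · show eval ![a, 0] (zm 1) = a * Pm a 0
      rw [show zm 1 = X 0 from rfl]; simp [Pm]
  | succ m ih =>
    obtain ⟨ih0, ih1⟩ := ih
    cases m with
    | zero =>
      have hP1 : Pm a 1 = a ^ 2 - 16 := by
        rw [Pm, Finset.prod_range_one]; norm_num
      constructor
      · show eval ![a, 0] (zm 2) = Pm a 1
        rw [show zm 2 = X 0 * zm 1 - C 16 * zm 0 from rfl,
          show zm 1 = X 0 from rfl, show zm 0 = 1 from rfl, hP1]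
        simp only [map_sub, map_mul, map_one, eval_X, eval_C,
          Matrix.cons_val_zero, Matrix.cons_val_one, Matrix.head_cons]
        ring
      · show eval ![a, 0] (zm (0 + 3)) = a * Pm a 1
        rw [eval_zm_rec, if_pos (by omega),
          show eval ![a,0] (zm (0+2)) = eval ![a,0] (zm 2) from rfl,
          show zm 2 = X 0 * zm 1 - C 16 * zm 0 from rfl,
          show zm 1 = X 0 from rfl, show zm 0 = 1 from rfl, hP1]
        simp only [map_sub, map_mul, map_one, eval_X, eval_C,
          Matrix.cons_val_zero, Matrix.cons_val_one, Matrix.head_cons]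
        push_cast
        ring
    | succ k =>
      have hA : eval ![a, 0] (zm (2 * (k + 2))) = Pm a (k + 2) := by
        rw [show 2 * (k + 2) = (2 * k + 1) + 3 by omega, eval_zm_rec, if_neg (by omega)]
        rw [show (2 * k + 1) + 2 = 2 * (k + 1) + 1 by omega,
          show (2 * k + 1) + 1 = 2 * (k + 1) by omega]
        rw [ih0, ih1]
        rw [show Pm a (k + 2) = Pm a (k + 1) * (a ^ 2 - 16 * (2 * ((k : ℂ) + 1) + 1) ^ 2) by
          rw [Pm, Pm, Finset.prod_range_succ]; push_cast; ring]
        simp only [Matrix.cons_val_zero, Matrix.cons_val_one, Matrix.head_cons]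
        push_cast
        ring
      refine ⟨hA, ?_⟩
      rw [show 2 * (k + 2) + 1 = (2 * (k + 1)) + 3 by omega, eval_zm_rec, if_pos (by omega)]
      rw [show (2 * (k + 1)) + 2 = 2 * (k + 2) by omega, hA]
      simp only [Matrix.cons_val_zero, Matrix.cons_val_one, Matrix.head_cons]
      ring

lemma point_mem_zeroLocus {g m i : ℕ} (hm : g = 2 * m + 1) (hi : i < m) {a : ℂ}
    (ha : a ^ 2 - 16 * (2 * (i : ℂ) + 1) ^ 2 = 0) :
    (![a, 0]) ∈ MvPolynomial.zeroLocus ℂ (Jm g) := by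
  rw [mem_zeroLocus_Jm_iff]
  have P0 : Pm a m = 0 := by
    rw [Pm]; exact Finset.prod_eq_zero (Finset.mem_range.mpr hi) ha
  have P1 : Pm a (m + 1) = 0 := by
    rw [Pm]; exact Finset.prod_eq_zero (Finset.mem_range.mpr (by omega)) ha
  refine ⟨?_, ?_, ?_⟩
  · rw [hm, (eval_zm_gamma a m).2, P0, mul_zero]
  · rw [show g + 1 = 2 * (m + 1) by omega, (eval_zm_gamma a (m + 1)).1, P1]
  · rw [show g + 2 = 2 * (m + 1) + 1 by omega, (eval_zm_gamma a (m + 1)).2, P1, mul_zero]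

lemma zeroLocus_Jm_subset {g m : ℕ} (hm : g = 2 * m + 1) {x : Fin 2 → ℂ}
    (hx : x ∈ MvPolynomial.zeroLocus ℂ (Jm g)) :
    ∃ j : ℕ, 1 ≤ j ∧ j ≤ m ∧
      (x = ![(4 * ((g : ℂ) - 2 * j) : ℂ), 0] ∨ x = ![(-4 * ((g : ℂ) - 2 * j) : ℂ), 0]) := by
  obtain ⟨h0, h1, h2⟩ := mem_zeroLocus_Jm_iff.mp hx
  have hx1 : x 1 = 0 := x1_eq_zero_of_zeros h0 h1 h2
  set a := x 0 with hadef
  have hxv : x = ![a, 0] := by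
    funext i
    fin_cases i
    · rfl
    · simpa using hx1
  rw [hxv] at h0 h1
  rw [hm, (eval_zm_gamma a m).2] at h0
  rw [show g + 1 = 2 * (m + 1) by omega, (eval_zm_gamma a (m + 1)).1] at h1
  -- find a vanishing factor with index < m
  have hex : ∃ i : ℕ, i < m ∧ a ^ 2 - 16 * (2 * (i : ℂ) + 1) ^ 2 = 0 := by
    by_cases hPm : Pm a m = 0
    · rw [Pm] at hPm
      obtain ⟨i, hi, hzero⟩ := Finset.prod_eq_zero_iff.mp hPm
      exact ⟨i, Finset.mem_range.mp hi, hzero⟩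
    · have ha0 : a = 0 := by
        rcases mul_eq_zero.mp h0 with h | h
        · exact h
        · exact absurd h hPm
      exfalso
      rw [Pm] at h1
      obtain ⟨i, _, hzero⟩ := Finset.prod_eq_zero_iff.mp h1
      rw [ha0] at hzero
      have hne : (2 * (i : ℂ) + 1) ≠ 0 := by
        have : ((2 * i + 1 : ℕ) : ℂ) ≠ 0 := Nat.cast_ne_zero.mpr (by omega)
        push_cast at this; exact this
      have : (2 * (i : ℂ) + 1) ^ 2 ≠ 0 := pow_ne_zero _ hne
      apply this
      have : (16 : ℂ) * (2 * (i : ℂ) + 1) ^ 2 = 0 := by linear_combination -hzero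
      rcases mul_eq_zero.mp this with h | h
      · norm_num at h
      · exact h
  obtain ⟨i, hi, hzero⟩ := hex
  refine ⟨m - i, by omega, by omega, ?_⟩
  have hcast : (g : ℂ) - 2 * ((m - i : ℕ) : ℂ) = 2 * (i : ℂ) + 1 := by
    rw [Nat.cast_sub (by omega : i ≤ m), hm]
    push_cast
    ring
  have hsq : (a - 4 * (2 * (i : ℂ) + 1)) * (a + 4 * (2 * (i : ℂ) + 1)) = 0 := by
    linear_combination hzero
  rcases mul_eq_zero.mp hsq with h | h
  · left
    rw [hxv, hcast]
    have : a = 4 * (2 * (i : ℂ) + 1) := by linear_combination h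
    rw [this]
  · right
    rw [hxv, hcast]
    have : a = -4 * (2 * (i : ℂ) + 1) := by linear_combination h
    rw [this]

/-- For g ≥ 1 odd, f ∈ ℂ[α,γ] is a unit modulo J_g^- iff f(±4(g−2j), 0) ≠ 0 for
    every j = 1, …, (g−1)/2. -/
theorem isUnit_mod_Jm_iff (g : ℕ) (hg : 1 ≤ g) (hodd : Odd g) (f : MvPolynomial (Fin 2) ℂ) :
    IsUnit (Ideal.Quotient.mk (Jm g) f) ↔
      ∀ j : ℕ, 1 ≤ j → j ≤ (g - 1) / 2 →
        eval ![(4 * ((g : ℂ) - 2 * j) : ℂ), 0] f ≠ 0 ∧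
        eval ![(-4 * ((g : ℂ) - 2 * j) : ℂ), 0] f ≠ 0 := by
  obtain ⟨m, hm0⟩ := hodd
  have hm : g = 2 * m + 1 := by omega
  have hm' : (g - 1) / 2 = m := by omega
  rw [isUnit_mk_iff_zeroLocus, hm']
  constructor
  · intro h j hj1 hj2
    have hcast : (g : ℂ) - 2 * (j : ℂ) = 2 * ((m - j : ℕ) : ℂ) + 1 := by
      rw [Nat.cast_sub hj2, hm]
      push_cast
      ring
    have hi : m - j < m := by omega
    constructor
    · apply h
      apply point_mem_zeroLocus hm hi (a := 4 * ((g : ℂ) - 2 * j))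
      rw [hcast]
      ring
    · apply h
      apply point_mem_zeroLocus hm hi (a := -4 * ((g : ℂ) - 2 * j))
      rw [hcast]
      ring
  · intro h x hx
    obtain ⟨j, hj1, hj2, hcase⟩ := zeroLocus_Jm_subset hm hx
    rcases hcase with rfl | rfl
    · exact (h j hj1 hj2).1
    · exact (h j hj1 hj2).2
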